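/- For all complex-valued Schwartz functions f, g, h on ℝ^{2N}: ∫ (f × g)(u) h(u) du = ∫ f(u) (g × h)(u) du = ∫ g(u) (h × f)(u) du. -/

import Mathlib

open MeasureTheory SchwartzMap Complex

noncomputable section

abbrev PS (N : ℕ) := EuclideanSpace ℝ (Fin N ⊕ Fin N)

def symp {N : ℕ} (u v : PS N) : ℝ :=
  ∑ i : Fin N, (u (Sum.inl i) * v (Sum.inr i) - u (Sum.inr i) * v (Sum.inl i))

def mes (N : ℕ) : Measure (PS N) :=
  (ENNReal.ofReal ((2 * Real.pi) ^ N))⁻¹ • (volume : Measure (PS N))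

def twProd {N : ℕ} (f g : PS N → ℂ) : PS N → ℂ := fun u =>
  ∫ s, ∫ t, f (u + s) * g (u + t) * Complex.exp (Complex.I * (symp s t : ℂ)) ∂(mes N) ∂(mes N)

namespace TwAux

lemma mes_const_ne_top (N : ℕ) : (ENNReal.ofReal ((2 * Real.pi) ^ N))⁻¹ ≠ ⊤ := by
  rw [ENNReal.inv_ne_top]
  exact (ENNReal.ofReal_pos.mpr (pow_pos (by positivity) N)).ne'

instance (N : ℕ) : SigmaFinite (mes N) := by
  rw [mes, ← ENNReal.coe_toNNReal (mes_const_ne_top N)]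
  exact SMul.sigmaFinite _

instance (N : ℕ) : (mes N).IsAddLeftInvariant := by
  rw [mes]; infer_instance

lemma schwartz_integrable {N : ℕ} (f : SchwartzMap (PS N) ℂ) : Integrable f (mes N) :=
  (f.integrable (μ := volume)).smul_measure (mes_const_ne_top N)

lemma symp_sub_sub {N : ℕ} (a b u : PS N) :
    symp (a - u) (b - u) = symp a b + symp b u + symp u a := by
  simp only [symp, PiLp.sub_apply]
  rw [← Finset.sum_add_distrib, ← Finset.sum_add_distrib]
  exact Finset.sum_congr rfl fun i _ => by ring

lemma continuous_symp {N : ℕ} : Continuous fun p : PS N × PS N => symp p.1 p.2 := by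
  unfold symp
  refine continuous_finset_sum _ fun i _ => Continuous.sub ?_ ?_ <;>
  · exact Continuous.mul
      (((EuclideanSpace.proj _).continuous).comp continuous_fst)
      (((EuclideanSpace.proj _).continuous).comp continuous_snd)

/-- Normal form of the twisted product after translation. -/
lemma twProd_eq {N : ℕ} (f g : PS N → ℂ) (u : PS N) :
    twProd f g u = ∫ a, ∫ b, f a * g b *
      Complex.exp (Complex.I * ((symp a b + symp b u + symp u a : ℝ) : ℂ))
      ∂(mes N) ∂(mes N) := by
  unfold twProd
  calc (∫ s, ∫ t, f (u + s) * g (u + t) *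
          Complex.exp (Complex.I * ((symp s t : ℝ) : ℂ)) ∂(mes N) ∂(mes N))
      = ∫ s, (fun a => ∫ t, f a * g (u + t) *
          Complex.exp (Complex.I * ((symp (a - u) t : ℝ) : ℂ)) ∂(mes N)) (u + s) ∂(mes N) := by
        refine integral_congr_ae (Filter.Eventually.of_forall fun s => ?_)
        simp [add_sub_cancel_left]
    _ = ∫ a, (fun a => ∫ t, f a * g (u + t) *
          Complex.exp (Complex.I * ((symp (a - u) t : ℝ) : ℂ)) ∂(mes N)) a ∂(mes N) :=
        integral_add_left_eq_self (μ := mes N)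
          (fun a => ∫ t, f a * g (u + t) *
            Complex.exp (Complex.I * ((symp (a - u) t : ℝ) : ℂ)) ∂(mes N)) u
    _ = ∫ a, ∫ b, f a * g b *
          Complex.exp (Complex.I * ((symp a b + symp b u + symp u a : ℝ) : ℂ))
          ∂(mes N) ∂(mes N) := by
        refine integral_congr_ae (Filter.Eventually.of_forall fun a => ?_)
        beta_reduce
        calc (∫ t, f a * g (u + t) *
                Complex.exp (Complex.I * ((symp (a - u) t : ℝ) : ℂ)) ∂(mes N))
            = ∫ t, (fun b => f a * g b *
                Complex.exp (Complex.I * ((symp (a - u) (b - u) : ℝ) : ℂ))) (u + t) ∂(mes N) := by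
              refine integral_congr_ae (Filter.Eventually.of_forall fun t => ?_)
              simp [add_sub_cancel_left]
          _ = ∫ b, (fun b => f a * g b *
                Complex.exp (Complex.I * ((symp (a - u) (b - u) : ℝ) : ℂ))) b ∂(mes N) :=
              integral_add_left_eq_self (μ := mes N)
                (fun b => f a * g b *
                  Complex.exp (Complex.I * ((symp (a - u) (b - u) : ℝ) : ℂ))) u
          _ = ∫ b, f a * g b *
                Complex.exp (Complex.I * ((symp a b + symp b u + symp u a : ℝ) : ℂ)) ∂(mes N) := by
              refine integral_congr_ae (Filter.Eventually.of_forall fun b => ?_)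
              beta_reduce
              rw [symp_sub_sub]

variable {N : ℕ}

/-- The triple product measure. -/
def mes3 (N : ℕ) : Measure (PS N × PS N × PS N) :=
  (mes N).prod ((mes N).prod (mes N))

/-- The common integrand. -/
def Phi (f g h : SchwartzMap (PS N) ℂ) : PS N × PS N × PS N → ℂ := fun p =>
  f p.1 * g p.2.1 * h p.2.2 *
    Complex.exp (Complex.I * ((symp p.1 p.2.1 + symp p.2.1 p.2.2 + symp p.2.2 p.1 : ℝ) : ℂ))

lemma Phi_integrable (f g h : SchwartzMap (PS N) ℂ) :
    Integrable (Phi f g h) (mes3 N) := by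
  haveI : OpensMeasurableSpace (PS N × PS N × PS N) := Prod.opensMeasurableSpace
  have hfgh : Integrable (fun p : PS N × PS N × PS N => f p.1 * (g p.2.1 * h p.2.2)) (mes3 N) :=
    (schwartz_integrable f).mul_prod ((schwartz_integrable g).mul_prod (schwartz_integrable h))
  refine hfgh.mono ?_ (Filter.Eventually.of_forall fun p => ?_)
  · refine Continuous.aestronglyMeasurable ?_
    refine Continuous.mul (Continuous.mul (Continuous.mul ?_ ?_) ?_) ?_
    · exact f.continuous.comp continuous_fst
    · exact g.continuous.comp (continuous_fst.comp continuous_snd)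
    · exact h.continuous.comp (continuous_snd.comp continuous_snd)
    · refine Complex.continuous_exp.comp (continuous_const.mul ?_)
      refine Complex.continuous_ofReal.comp ?_
      refine Continuous.add (Continuous.add ?_ ?_) ?_
      · exact continuous_symp.comp (continuous_fst.prodMk (continuous_fst.comp continuous_snd))
      · exact continuous_symp.comp
          ((continuous_fst.comp continuous_snd).prodMk (continuous_snd.comp continuous_snd))
      · exact continuous_symp.comp ((continuous_snd.comp continuous_snd).prodMk continuous_fst)
  · simp only [Phi, norm_mul]
    have : ‖Complex.exp (Complex.I *
        ((symp p.1 p.2.1 + symp p.2.1 p.2.2 + symp p.2.2 p.1 : ℝ) : ℂ))‖ = 1 := by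
      rw [Complex.norm_exp]
      simp
    rw [this, mul_one, mul_assoc]

/-- The cyclic shift as a measurable equivalence. -/
def cyc (N : ℕ) : (PS N × PS N × PS N) ≃ᵐ (PS N × PS N × PS N) :=
  (MeasurableEquiv.prodComm : (PS N × (PS N × PS N)) ≃ᵐ _).trans MeasurableEquiv.prodAssoc

lemma cyc_apply (p : PS N × PS N × PS N) : cyc N p = (p.2.1, p.2.2, p.1) := by
  simp [cyc, MeasurableEquiv.trans, MeasurableEquiv.prodComm, MeasurableEquiv.prodAssoc]

lemma cyc_measurePreserving : MeasurePreserving (cyc N) (mes3 N) (mes3 N) := by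
  exact (measurePreserving_prodAssoc (mes N) (mes N) (mes N)).comp
    Measure.measurePreserving_swap

lemma integral_comp_cyc (Ψ : PS N × PS N × PS N → ℂ) :
    ∫ p, Ψ (cyc N p) ∂(mes3 N) = ∫ p, Ψ p ∂(mes3 N) :=
  cyc_measurePreserving.integral_comp (cyc N).measurableEmbedding Ψ

lemma iter_eq (Ψ : PS N × PS N × PS N → ℂ) (hΨ : Integrable Ψ (mes3 N)) :
    (∫ x, ∫ y, ∫ z, Ψ (x, (y, z)) ∂(mes N) ∂(mes N) ∂(mes N)) = ∫ p, Ψ p ∂(mes3 N) := by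
  rw [mes3, integral_prod _ hΨ]
  refine integral_congr_ae ?_
  filter_upwards [hΨ.prod_right_ae] with x hx
  rw [integral_prod _ hx]

end TwAux

open TwAux in
theorem twProd_cyclic_pairing (N : ℕ) (hN : 0 < N)
    (f g h : SchwartzMap (PS N) ℂ) :
    (∫ u, twProd (⇑f) (⇑g) u * h u ∂(mes N)) = (∫ u, f u * twProd (⇑g) (⇑h) u ∂(mes N)) ∧
    (∫ u, twProd (⇑f) (⇑g) u * h u ∂(mes N)) = ∫ u, g u * twProd (⇑h) (⇑f) u ∂(mes N) := by
  have hΦ := Phi_integrable f g h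
  have hΦc : Integrable (fun p => Phi f g h (cyc N p)) (mes3 N) :=
    (cyc_measurePreserving.integrable_comp_emb (cyc N).measurableEmbedding).mpr hΦ
  have hΦcc : Integrable (fun p => Phi f g h (cyc N (cyc N p))) (mes3 N) :=
    (cyc_measurePreserving.integrable_comp_emb (cyc N).measurableEmbedding).mpr hΦc
  -- I₁
  have hI1 : (∫ u, twProd (⇑f) (⇑g) u * h u ∂(mes N)) = ∫ p, Phi f g h p ∂(mes3 N) := by
    have e1 : (∫ u, twProd (⇑f) (⇑g) u * h u ∂(mes N))
        = ∫ x, ∫ y, ∫ z, Phi f g h (cyc N (x, (y, z))) ∂(mes N) ∂(mes N) ∂(mes N) := by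
      refine integral_congr_ae (Filter.Eventually.of_forall fun u => ?_)
      beta_reduce
      rw [twProd_eq, ← integral_mul_const]
      refine integral_congr_ae (Filter.Eventually.of_forall fun a => ?_)
      beta_reduce
      rw [← integral_mul_const]
      refine integral_congr_ae (Filter.Eventually.of_forall fun b => ?_)
      beta_reduce
      simp only [cyc_apply, Phi]
      ring
    rw [e1, iter_eq _ hΦc, integral_comp_cyc (Phi f g h)]
  -- I₂
  have hI2 : (∫ u, f u * twProd (⇑g) (⇑h) u ∂(mes N)) = ∫ p, Phi f g h p ∂(mes3 N) := by
    have e2 : (∫ u, f u * twProd (⇑g) (⇑h) u ∂(mes N))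
        = ∫ x, ∫ y, ∫ z, Phi f g h (x, (y, z)) ∂(mes N) ∂(mes N) ∂(mes N) := by
      refine integral_congr_ae (Filter.Eventually.of_forall fun u => ?_)
      beta_reduce
      rw [twProd_eq, ← integral_const_mul]
      refine integral_congr_ae (Filter.Eventually.of_forall fun a => ?_)
      beta_reduce
      rw [← integral_const_mul]
      refine integral_congr_ae (Filter.Eventually.of_forall fun b => ?_)
      beta_reduce
      simp only [Phi]
      rw [show (symp u a + symp a b + symp b u : ℝ)
          = (symp a b + symp b u + symp u a : ℝ) by ring]
      ring
    rw [e2, iter_eq _ hΦ]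
  -- I₃
  have hI3 : (∫ u, g u * twProd (⇑h) (⇑f) u ∂(mes N)) = ∫ p, Phi f g h p ∂(mes3 N) := by
    have e3 : (∫ u, g u * twProd (⇑h) (⇑f) u ∂(mes N))
        = ∫ x, ∫ y, ∫ z, Phi f g h (cyc N (cyc N (x, (y, z)))) ∂(mes N) ∂(mes N) ∂(mes N) := by
      refine integral_congr_ae (Filter.Eventually.of_forall fun u => ?_)
      beta_reduce
      rw [twProd_eq, ← integral_const_mul]
      refine integral_congr_ae (Filter.Eventually.of_forall fun a => ?_)
      beta_reduce
      rw [← integral_const_mul]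
      refine integral_congr_ae (Filter.Eventually.of_forall fun b => ?_)
      beta_reduce
      simp only [cyc_apply, Phi]
      rw [show (symp b u + symp u a + symp a b : ℝ)
          = (symp a b + symp b u + symp u a : ℝ) by ring]
      ring
    rw [e3, iter_eq _ hΦcc, integral_comp_cyc (fun q => Phi f g h (cyc N q)),
      integral_comp_cyc (Phi f g h)]
  exact ⟨hI1.trans hI2.symm, hI1.trans hI3.symm⟩
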